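/- If each state-transition matrix A_i is a scalar multiple of the identity, A_i = a_i I with a_i ∈ ℝ, then for the block-partitioned input of k documents followed by a query, the output simplifies to y_t = C_t (Σ_{i=1}^k α_i h_{d_i} + h_q), where α_i = Π_{j=τ_i+1}^{t} a_j is a scalar, h_{d_i} is the state from processing block i alone, and h_q is the state from processing the query alone. -/

import Mathlib

open Matrix BigOperators

/-- Ordered product `A_t * A_{t-1} * ⋯ * A_s`, equal to the identity when `s > t`. -/
noncomputable def prodA {n : ℕ} (A : ℕ → Matrix (Fin n) (Fin n) ℝ) (t s : ℕ) :
    Matrix (Fin n) (Fin n) ℝ :=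
  (((List.range' s (t + 1 - s)).reverse).map A).prod

lemma listprod_scalar {n : ℕ} (a : ℕ → ℝ) (L : List ℕ) :
    ((L.map (fun j => a j • (1 : Matrix (Fin n) (Fin n) ℝ))).prod)
      = ((L.map a).prod) • (1 : Matrix (Fin n) (Fin n) ℝ) := by
  induction L with
  | nil => simp
  | cons hd tl ih =>
      simp [ih, Matrix.smul_mul, Matrix.mul_smul, smul_smul, mul_comm]

lemma prodA_scalar {n : ℕ} (A : ℕ → Matrix (Fin n) (Fin n) ℝ) (a : ℕ → ℝ)
    (hA : ∀ j, A j = a j • (1 : Matrix (Fin n) (Fin n) ℝ)) (t s : ℕ) :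
    prodA A t s = (∏ j ∈ Finset.Ico s (t + 1), a j) • (1 : Matrix (Fin n) (Fin n) ℝ) := by
  unfold prodA
  have hfun : A = fun j => a j • (1 : Matrix (Fin n) (Fin n) ℝ) := funext hA
  rw [hfun, listprod_scalar, List.map_reverse, List.prod_reverse]
  congr 1

lemma h_unroll {n m : ℕ} (a : ℕ → ℝ) (B : ℕ → Matrix (Fin n) (Fin m) ℝ)
    (x : ℕ → Fin m → ℝ) (h : ℕ → Fin n → ℝ) (h0 : h 0 = 0)
    (hrec : ∀ i, h (i + 1) = a (i + 1) • h i + B (i + 1) *ᵥ x (i + 1)) :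
    ∀ t, h t = ∑ j ∈ Finset.Ioc 0 t,
      (∏ i ∈ Finset.Ico (j + 1) (t + 1), a i) • (B j *ᵥ x j) := by
  intro t
  induction t with
  | zero => simp [h0]
  | succ t ih =>
      rw [hrec, ih, Finset.sum_Ioc_succ_top (Nat.zero_le _), Finset.smul_sum]
      congr 1
      · apply Finset.sum_congr rfl
        intro j hj
        have hjt : j + 1 ≤ t + 1 := Nat.succ_le_succ (Finset.mem_Ioc.mp hj).2
        rw [smul_smul, Finset.prod_Ico_succ_top hjt, mul_comm]
      · simp

lemma tau0_le (τ : ℕ → ℕ) : ∀ k, (∀ i, i < k → τ i ≤ τ (i + 1)) → τ 0 ≤ τ k := by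
  intro k
  induction k with
  | zero => intro _; exact le_rfl
  | succ k ih =>
      intro hm
      exact (ih fun i hi => hm i (hi.trans (Nat.lt_succ_self k))).trans
        (hm k (Nat.lt_succ_self k))

lemma tau_mono (τ : ℕ → ℕ) (k : ℕ) (hm : ∀ i, i < k → τ i ≤ τ (i + 1)) :
    ∀ j, j ≤ k → ∀ i, i ≤ j → τ i ≤ τ j := by
  intro j
  induction j with
  | zero => intro _ i hi; simp [Nat.le_zero.mp hi]
  | succ j ih =>
      intro hjk i hi
      rcases Nat.eq_or_lt_of_le hi with rfl | hlt
      · exact le_rfl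
      · exact (ih ((Nat.le_succ j).trans hjk) i (Nat.lt_succ_iff.mp hlt)).trans
          (hm j (Nat.lt_of_lt_of_le (Nat.lt_succ_self j) hjk))

lemma sum_blocks {M : Type*} [AddCommMonoid M] (f : ℕ → M) (τ : ℕ → ℕ) :
    ∀ k, (∀ i, i < k → τ i ≤ τ (i + 1)) →
      ∑ i ∈ Finset.Icc 1 k, ∑ j ∈ Finset.Ioc (τ (i - 1)) (τ i), f j
        = ∑ j ∈ Finset.Ioc (τ 0) (τ k), f j := by
  intro k
  induction k with
  | zero => simp
  | succ k ih =>
      intro hmono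
      have hmono' : ∀ i, i < k → τ i ≤ τ (i + 1) :=
        fun i hi => hmono i (hi.trans (Nat.lt_succ_self k))
      rw [Finset.sum_Icc_succ_top (Nat.le_add_left 1 k), ih hmono']
      simp only [Nat.add_sub_cancel]
      exact Finset.sum_Ioc_consecutive f (tau0_le τ k hmono') (hmono k (Nat.lt_succ_self k))

theorem stmt4 {n m p : ℕ} (k t : ℕ)
    (A : ℕ → Matrix (Fin n) (Fin n) ℝ) (a : ℕ → ℝ)
    (hA : ∀ j, A j = a j • (1 : Matrix (Fin n) (Fin n) ℝ))
    (B : ℕ → Matrix (Fin n) (Fin m) ℝ)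
    (C : ℕ → Matrix (Fin p) (Fin n) ℝ)
    (x : ℕ → Fin m → ℝ) (h : ℕ → Fin n → ℝ) (y : ℕ → Fin p → ℝ)
    (h0 : h 0 = 0)
    (hrec : ∀ i, h (i + 1) = A (i + 1) *ᵥ h i + B (i + 1) *ᵥ x (i + 1))
    (hy : ∀ i, y i = C i *ᵥ h i)
    (τ : ℕ → ℕ) (hτ0 : τ 0 = 0) (hτmono : ∀ i, i < k → τ i < τ (i + 1)) (hτk : τ k ≤ t)
    (hd : ℕ → Fin n → ℝ)
    (hhd : ∀ i, 1 ≤ i → i ≤ k →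
      hd i = ∑ j ∈ Finset.Ioc (τ (i - 1)) (τ i), prodA A (τ i) (j + 1) *ᵥ (B j *ᵥ x j))
    (hq : Fin n → ℝ)
    (hhq : hq = ∑ j ∈ Finset.Ioc (τ k) t, prodA A t (j + 1) *ᵥ (B j *ᵥ x j)) :
    y t = C t *ᵥ (∑ i ∈ Finset.Icc 1 k, (∏ j ∈ Finset.Ioc (τ i) t, a j) • hd i + hq) := by
  have hmono' : ∀ i, i < k → τ i ≤ τ (i + 1) := fun i hi => (hτmono i hi).le
  have hrec' : ∀ i, h (i + 1) = a (i + 1) • h i + B (i + 1) *ᵥ x (i + 1) := by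
    intro i
    rw [hrec, hA, Matrix.smul_mulVec, Matrix.one_mulVec]
  set c : ℕ → ℝ := fun j => ∏ i ∈ Finset.Ico (j + 1) (t + 1), a i with hc
  set v : ℕ → Fin n → ℝ := fun j => B j *ᵥ x j with hv
  -- rewrite hq
  have hq' : hq = ∑ j ∈ Finset.Ioc (τ k) t, c j • v j := by
    rw [hhq]
    apply Finset.sum_congr rfl
    intro j _
    rw [prodA_scalar A a hA, Matrix.smul_mulVec, Matrix.one_mulVec]
  -- rewrite each block term
  have hblock : ∀ i ∈ Finset.Icc 1 k,
      (∏ j ∈ Finset.Ioc (τ i) t, a j) • hd i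
        = ∑ j ∈ Finset.Ioc (τ (i - 1)) (τ i), c j • v j := by
    intro i hi
    obtain ⟨hi1, hik⟩ := Finset.mem_Icc.mp hi
    rw [hhd i hi1 hik, Finset.smul_sum]
    apply Finset.sum_congr rfl
    intro j hj
    rw [prodA_scalar A a hA, Matrix.smul_mulVec, Matrix.one_mulVec, smul_smul]
    congr 1
    have hjτ : j + 1 ≤ τ i + 1 := Nat.succ_le_succ (Finset.mem_Ioc.mp hj).2
    have hτt : τ i + 1 ≤ t + 1 :=
      Nat.succ_le_succ ((tau_mono τ k hmono' k le_rfl i hik).trans hτk)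
    rw [← Finset.Ico_add_one_add_one_eq_Ioc, mul_comm, Finset.prod_Ico_consecutive a hjτ hτt]
  rw [hy, Finset.sum_congr rfl hblock, hq',
      sum_blocks (fun j => c j • v j) τ k hmono', hτ0,
      Finset.sum_Ioc_consecutive (fun j => c j • v j) (Nat.zero_le (τ k)) hτk,
      ← h_unroll a B x h h0 hrec' t]
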